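/- arXiv:1805.05641 — 2 statements merged into one kernel-verified Lean document; each statement's English description precedes it below -/
import Mathlib

section
/- Let 1 ≤ k < n, let κ_1 < κ_2 < … < κ_n be real numbers, c_1, …, c_n real constants, and let A be a real k×n matrix of rank k with all k×k minors Δ_I(A) ≥ 0. Set f_i(x) = Σ_{j=1}^n A_{ij} e^{κ_j x + c_j}. Then the Wronskian τ(x) = det( f_i^{(l−1)}(x) )_{i,l=1}^k is strictly positive for every x ∈ ℝ. -/
open scoped BigOperators

/-- The `k × k` maximal minor of a real `k × n` matrix `A` on the set of columns `I`
(defined to be `0` when `I` does not have exactly `k` elements). -/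
noncomputable def maxMinor {k n : ℕ} (A : Matrix (Fin k) (Fin n) ℝ)
    (I : Finset (Fin n)) : ℝ :=
  if h : I.card = k then
    (A.submatrix id fun j => ((I.orderIsoOfFin h) j : Fin n)).det
  else 0

open Finset Matrix Equiv

/-- Row analogue of `maxMinor`. -/
noncomputable def rowMinor {k n : ℕ} (B : Matrix (Fin n) (Fin k) ℝ)
    (I : Finset (Fin n)) : ℝ :=
  if h : I.card = k then
    (B.submatrix (fun j => ((I.orderIsoOfFin h) j : Fin n)) id).det
  else 0

/-- Cauchy–Binet formula. -/
lemma cauchy_binet {k n : ℕ} (A : Matrix (Fin k) (Fin n) ℝ)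
    (B : Matrix (Fin n) (Fin k) ℝ) :
    (A * B).det = ∑ I : Finset (Fin n), maxMinor A I * rowMinor B I := by
  classical
  have step1 : (A * B).det
      = ∑ g : Fin k → Fin n, (∏ l, B (g l) l) * (A.submatrix id g).det := by
    calc
      (A * B).det
          = ∑ g : Fin k → Fin n, ∑ σ : Perm (Fin k),
              ((Equiv.Perm.sign σ : ℤ) : ℝ) * ∏ l, A (σ l) (g l) * B (g l) l := by
        simp only [det_apply', mul_apply, prod_univ_sum, mul_sum, Fintype.piFinset_univ]
        rw [Finset.sum_comm]
      _ = ∑ g : Fin k → Fin n, (∏ l, B (g l) l) * (A.submatrix id g).det := by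
        refine Finset.sum_congr rfl fun g _ => ?_
        have hdet : (A.submatrix id g).det
            = ∑ σ : Perm (Fin k), ((Equiv.Perm.sign σ : ℤ) : ℝ) * ∏ l, A (σ l) (g l) := by
          simp [det_apply', submatrix_apply]
        rw [hdet, Finset.mul_sum]
        refine Finset.sum_congr rfl fun σ _ => ?_
        rw [Finset.prod_mul_distrib]
        ring
  rw [step1,
    ← Finset.sum_fiberwise univ (fun g : Fin k → Fin n => Finset.image g univ)
      (fun g => (∏ l, B (g l) l) * (A.submatrix id g).det)]
  refine Finset.sum_congr rfl fun I _ => ?_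
  by_cases h : I.card = k
  · set e : Fin k → Fin n := fun l => ((I.orderIsoOfFin h) l : Fin n) with he
    have einj : Function.Injective e := fun a b hab =>
      (I.orderIsoOfFin h).injective (Subtype.coe_injective hab)
    have himg : Finset.image e univ = I := by
      ext j
      simp only [Finset.mem_image, Finset.mem_univ, true_and]
      constructor
      · rintro ⟨l, rfl⟩; exact ((I.orderIsoOfFin h) l).2
      · intro hj
        exact ⟨(I.orderIsoOfFin h).symm ⟨j, hj⟩,
          congrArg Subtype.val ((I.orderIsoOfFin h).apply_symm_apply ⟨j, hj⟩)⟩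
    have key : ∑ g ∈ univ.filter (fun g : Fin k → Fin n => Finset.image g univ = I),
        (∏ l, B (g l) l) * (A.submatrix id g).det
        = ∑ σ : Perm (Fin k), (∏ l, B (e (σ l)) l) * (A.submatrix id (e ∘ σ)).det := by
      refine (Finset.sum_bij (fun (σ : Perm (Fin k)) _ => e ∘ σ) ?_ ?_ ?_ ?_).symm
      · intro σ _
        simp only [Finset.mem_filter, Finset.mem_univ, true_and]
        rw [← himg]
        ext j
        simp only [Finset.mem_image, Finset.mem_univ, true_and, Function.comp]
        constructor
        · rintro ⟨l, rfl⟩; exact ⟨σ l, rfl⟩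
        · rintro ⟨l, rfl⟩; exact ⟨σ.symm l, by simp⟩
      · intro σ _ τ _ hst
        exact Equiv.ext fun a => einj (congrFun hst a)
      · intro g hg
        have hgI : Finset.image g univ = I := (Finset.mem_filter.mp hg).2
        have hmem : ∀ a, g a ∈ I := fun a => by
          rw [← hgI]; exact Finset.mem_image_of_mem _ (Finset.mem_univ a)
        have hginj : Function.Injective g := by
          have hcard : (Finset.image g univ).card = (univ : Finset (Fin k)).card := by
            rw [hgI, h, Finset.card_univ, Fintype.card_fin]
          have hinjOn := Finset.card_image_iff.mp hcard
          intro a b hab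
          exact hinjOn (Finset.mem_coe.mpr (Finset.mem_univ a))
            (Finset.mem_coe.mpr (Finset.mem_univ b)) hab
        set σ0 : Fin k → Fin k := fun a => (I.orderIsoOfFin h).symm ⟨g a, hmem a⟩ with hσ0
        have hσ0inj : Function.Injective σ0 := by
          intro a b hab
          apply hginj
          have := congrArg (fun t => (((I.orderIsoOfFin h) t : Fin n))) hab
          simpa [hσ0] using this
        refine ⟨Equiv.ofBijective σ0 (Finite.injective_iff_bijective.mp hσ0inj),
          Finset.mem_univ _, ?_⟩
        funext a
        show e (σ0 a) = g a
        exact congrArg Subtype.val ((I.orderIsoOfFin h).apply_symm_apply ⟨g a, hmem a⟩)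
      · intro σ _; rfl
    have hA : ∀ σ : Perm (Fin k), (A.submatrix id (e ∘ σ)).det
        = ((Equiv.Perm.sign σ : ℤ) : ℝ) * (A.submatrix id e).det := by
      intro σ
      have hsub : A.submatrix id (e ∘ σ) = (A.submatrix id e).submatrix id σ := rfl
      rw [hsub, det_permute']
    rw [key]
    have hrow : rowMinor B I
        = ∑ σ : Perm (Fin k), ((Equiv.Perm.sign σ : ℤ) : ℝ) * ∏ l, B (e (σ l)) l := by
      rw [rowMinor, dif_pos h, det_apply']
      refine Finset.sum_congr rfl fun σ _ => ?_
      simp [submatrix_apply, he]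
    have hmax : maxMinor A I = (A.submatrix id e).det := by
      rw [maxMinor, dif_pos h]
    rw [hmax, hrow, Finset.mul_sum]
    refine Finset.sum_congr rfl fun σ _ => ?_
    rw [hA σ]
    ring
  · rw [maxMinor, dif_neg h, zero_mul]
    refine Finset.sum_eq_zero fun g hg => ?_
    have hgI : Finset.image g univ = I := (Finset.mem_filter.mp hg).2
    have hnotinj : ¬ Function.Injective g := by
      intro hinj
      apply h
      rw [← hgI, Finset.card_image_of_injective _ hinj, Finset.card_univ, Fintype.card_fin]
    obtain ⟨a, b, hab, hne⟩ : ∃ a b, g a = g b ∧ a ≠ b := by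
      simpa [Function.Injective, not_forall] using hnotinj
    have hdet : (A.submatrix id g).det = 0 :=
      det_zero_of_column_eq hne fun i => by simp [submatrix_apply, hab]
    rw [hdet, mul_zero]

/-- Iterated derivatives of finite sums of exponentials. -/
lemma iteratedDeriv_exp_sum {n : ℕ} (κ c : Fin n → ℝ) :
    ∀ (l : ℕ) (C : Fin n → ℝ) (x : ℝ),
      iteratedDeriv l (fun y => ∑ j, C j * Real.exp (κ j * y + c j)) x
        = ∑ j, C j * κ j ^ l * Real.exp (κ j * x + c j) := by
  intro l
  induction l with
  | zero => intro C x; simp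
  | succ l ih =>
    intro C x
    have hderiv : deriv (fun y => ∑ j, C j * Real.exp (κ j * y + c j))
        = fun y => ∑ j, (C j * κ j) * Real.exp (κ j * y + c j) := by
      funext y
      have h1 : HasDerivAt (fun y => ∑ j, C j * Real.exp (κ j * y + c j))
          (∑ j, (C j * κ j) * Real.exp (κ j * y + c j)) y := by
        refine HasDerivAt.fun_sum (F := ℝ) fun j _ => ?_
        have hin : HasDerivAt (fun y : ℝ => κ j * y + c j) (κ j) y := by
          simpa using ((hasDerivAt_id y).const_mul (κ j)).add_const (c j)
        have := (hin.exp).const_mul (C j)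
        rw [show C j * κ j * Real.exp (κ j * y + c j)
          = C j * (Real.exp (κ j * y + c j) * κ j) by ring]
        exact this
      exact h1.deriv
    rw [iteratedDeriv_succ', hderiv, ih (fun j => C j * κ j) x]
    refine Finset.sum_congr rfl fun j _ => ?_
    ring

/-- A real matrix of full rank `k` has a positive `k × k` minor, given TNN. -/
lemma exists_pos_maxMinor {k n : ℕ} (A : Matrix (Fin k) (Fin n) ℝ)
    (hrank : A.rank = k)
    (hTNN : ∀ I : Finset (Fin n), I.card = k → 0 ≤ maxMinor A I) :
    ∃ I : Finset (Fin n), I.card = k ∧ 0 < maxMinor A I := by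
  classical
  have hAAt : (A * Aᵀ).rank = k := by rw [Matrix.rank_self_mul_transpose, hrank]
  have hunit : IsUnit (A * Aᵀ) := by
    rw [← Matrix.mulVec_surjective_iff_isUnit]
    have hrange : LinearMap.range (A * Aᵀ).mulVecLin = ⊤ := by
      apply Submodule.eq_top_of_finrank_eq
      rw [Module.finrank_fin_fun]
      exact hAAt
    intro v
    obtain ⟨w, hw⟩ := (LinearMap.range_eq_top.mp hrange) v
    exact ⟨w, hw⟩
  have hdet : (A * Aᵀ).det ≠ 0 := by
    intro h0
    have := (Matrix.isUnit_iff_isUnit_det _).mp hunit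
    rw [h0] at this
    exact this.ne_zero rfl
  have hrowmax : ∀ I : Finset (Fin n), rowMinor Aᵀ I = maxMinor A I := by
    intro I
    by_cases h : I.card = k
    · rw [rowMinor, maxMinor, dif_pos h, dif_pos h]
      rw [← Matrix.det_transpose (A.submatrix id fun j => ((I.orderIsoOfFin h) j : Fin n))]
      congr 1
    · rw [rowMinor, maxMinor, dif_neg h, dif_neg h]
  have hsum : (A * Aᵀ).det = ∑ I : Finset (Fin n), maxMinor A I * maxMinor A I := by
    rw [cauchy_binet]
    exact Finset.sum_congr rfl fun I _ => by rw [hrowmax]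
  have : ∃ I : Finset (Fin n), maxMinor A I ≠ 0 := by
    by_contra hcon
    push_neg at hcon
    apply hdet
    rw [hsum]
    exact Finset.sum_eq_zero fun I _ => by rw [hcon I, mul_zero]
  obtain ⟨I, hI⟩ := this
  have hcard : I.card = k := by
    by_contra hc
    exact hI (by rw [maxMinor, dif_neg hc])
  exact ⟨I, hcard, lt_of_le_of_ne (hTNN I hcard) (Ne.symm hI)⟩

/-- for totally nonnegative soliton data of full rank `k` with ordered
phases, the Wronskian `τ(x)` of the heat-hierarchy solutions
`f_i(x) = Σ_j A_{ij} e^{κ_j x + c_j}` is strictly positive for every real `x`. -/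
theorem tau_pos_of_TNN
    (k n : ℕ) (hk : 1 ≤ k) (hkn : k < n)
    (κ c : Fin n → ℝ) (hκ : StrictMono κ)
    (A : Matrix (Fin k) (Fin n) ℝ) (hrank : A.rank = k)
    (hTNN : ∀ I : Finset (Fin n), I.card = k → 0 ≤ maxMinor A I)
    (f : Fin k → ℝ → ℝ)
    (hf : ∀ i x, f i x = ∑ j, A i j * Real.exp (κ j * x + c j))
    (τ : ℝ → ℝ)
    (hτ : ∀ x, τ x =
      Matrix.det (Matrix.of fun i l : Fin k => iteratedDeriv (l : ℕ) (f i) x))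
    (x : ℝ) :
    0 < τ x := by
  classical
  set E : Fin n → ℝ := fun j => Real.exp (κ j * x + c j) with hE
  set B : Matrix (Fin n) (Fin k) ℝ := Matrix.of fun j l => κ j ^ (l : ℕ) * E j with hB
  -- τ x = det (A * B)
  have hτAB : τ x = (A * B).det := by
    rw [hτ x]
    congr 1
    ext i l
    have hfi : f i = fun y => ∑ j, A i j * Real.exp (κ j * y + c j) := by
      funext y; exact hf i y
    rw [Matrix.of_apply, hfi, iteratedDeriv_exp_sum κ c (l : ℕ) (A i) x, Matrix.mul_apply]
    refine Finset.sum_congr rfl fun j _ => ?_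
    simp [hB, hE]
    ring
  -- positivity of the row minors of B
  have hrowpos : ∀ I : Finset (Fin n), I.card = k → 0 < rowMinor B I := by
    intro I h
    rw [rowMinor, dif_pos h]
    set e : Fin k → Fin n := fun l => ((I.orderIsoOfFin h) l : Fin n) with he
    have hsub : B.submatrix e id
        = Matrix.of fun a l => E (e a) * (Matrix.vandermonde fun a => κ (e a)) a l := by
      ext a l
      simp [hB, Matrix.vandermonde, Matrix.submatrix_apply]
      ring
    rw [hsub, Matrix.det_mul_column]
    have hmono : StrictMono fun a => κ (e a) := by
      intro a b hab
      apply hκ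
      exact Subtype.coe_lt_coe.mpr ((I.orderIsoOfFin h).strictMono hab)
    have hvdm : 0 < (Matrix.vandermonde fun a => κ (e a)).det := by
      rw [Matrix.det_vandermonde]
      refine Finset.prod_pos fun i _ => Finset.prod_pos fun j hj => ?_
      have hij : i < j := Finset.mem_Ioi.mp hj
      exact sub_pos.mpr (hmono hij)
    have hEpos : 0 < ∏ a, E (e a) :=
      Finset.prod_pos fun a _ => Real.exp_pos _
    exact mul_pos hEpos hvdm
  obtain ⟨I₀, hI₀card, hI₀pos⟩ := exists_pos_maxMinor A hrank hTNN
  rw [hτAB, cauchy_binet]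
  refine Finset.sum_pos' (fun I _ => ?_) ⟨I₀, Finset.mem_univ I₀, ?_⟩
  · by_cases h : I.card = k
    · exact mul_nonneg (hTNN I h) (le_of_lt (hrowpos I h))
    · rw [maxMinor, dif_neg h, zero_mul]
  · exact mul_pos hI₀pos (hrowpos I₀ hI₀card)
end

section
/- Let 1 ≤ k < n, κ_1 < … < κ_n real, c_1, …, c_n real, A a totally nonnegative real k×n matrix of rank k, and let w_1(x), …, w_k(x) be the Darboux coefficients. For v ∈ ℝ^n set h_v(x) = Σ_{j=1}^n v_j e^{κ_j x + c_j} and Ψ_v(x) = h_v^{(k)}(x) − Σ_{s=1}^k w_s(x) h_v^{(k−s)}(x). Then either Ψ_v vanishes identically on ℝ, or the zero set { x ∈ ℝ : Ψ_v(x) = 0 } is finite; in the latter case there exists x_0 such that Ψ_v(x) ≠ 0 for all x > x_0. -/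
open scoped BigOperators
open Filter Topology

/-- Iterated derivative of a finite sum of exponentials. -/
lemma iteratedDeriv_expsum {n : ℕ} (κ c : Fin n → ℝ) (b : Fin n → ℝ) :
    ∀ (m : ℕ) (x : ℝ), iteratedDeriv m (fun x => ∑ j, b j * Real.exp (κ j * x + c j)) x
      = ∑ j, b j * κ j ^ m * Real.exp (κ j * x + c j) := by
  intro m
  induction m with
  | zero => intro x; simp
  | succ m ih =>
      intro x
      rw [iteratedDeriv_succ]
      have hfun : iteratedDeriv m (fun x => ∑ j, b j * Real.exp (κ j * x + c j))
          = fun x => ∑ j, b j * κ j ^ m * Real.exp (κ j * x + c j) := funext ih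
      rw [hfun]
      have : HasDerivAt (fun x => ∑ j, b j * κ j ^ m * Real.exp (κ j * x + c j))
          (∑ j, b j * κ j ^ (m+1) * Real.exp (κ j * x + c j)) x := by
        apply HasDerivAt.fun_sum
        intro j _
        have hinner : HasDerivAt (fun x => κ j * x + c j) (κ j) x := by
          simpa using ((hasDerivAt_id x).const_mul (κ j)).add_const (c j)
        have hexp : HasDerivAt (fun x => Real.exp (κ j * x + c j))
            (Real.exp (κ j * x + c j) * κ j) x :=
          (Real.hasDerivAt_exp _).comp x hinner
        have := hexp.const_mul (b j * κ j ^ m)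
        exact this.congr_deriv (by ring)
      exact this.deriv

lemma expsum_analyticAt (T : Finset ℝ) (b : ℝ → ℝ) (x : ℝ) :
    AnalyticAt ℝ (fun x => ∑ μ ∈ T, b μ * Real.exp (μ * x)) x := by
  apply Finset.analyticAt_fun_sum
  intro μ _
  exact analyticAt_const.mul (analyticAt_rexp.comp (analyticAt_const.mul analyticAt_id))

/-- An exponential sum that does not vanish identically has finite zero set and is
eventually nonzero at `+∞`. -/
lemma expsum_zero_set (T : Finset ℝ) (b : ℝ → ℝ) (F : ℝ → ℝ)
    (hF : ∀ x, F x = ∑ μ ∈ T, b μ * Real.exp (μ * x))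
    (hne : ¬ ∀ x, F x = 0) :
    {x : ℝ | F x = 0}.Finite ∧ ∃ x₀ : ℝ, ∀ x, x₀ < x → F x ≠ 0 := by
  classical
  have hFfun : F = fun x => ∑ μ ∈ T, b μ * Real.exp (μ * x) := funext hF
  -- there is a nonzero coefficient
  have hbne : ∃ μ ∈ T, b μ ≠ 0 := by
    by_contra hall
    push_neg at hall
    exact hne fun x => by
      rw [hF]; exact Finset.sum_eq_zero fun μ hμ => by rw [hall μ hμ, zero_mul]
  set S : Finset ℝ := T.filter (fun μ => b μ ≠ 0) with hS
  have hSne : S.Nonempty := by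
    obtain ⟨μ, hμT, hμb⟩ := hbne
    exact ⟨μ, Finset.mem_filter.mpr ⟨hμT, hμb⟩⟩
  -- eventual nonvanishing at +∞
  have key : ∀ (μ₀ : ℝ), b μ₀ ≠ 0 → (∀ μ ∈ S, μ ≠ μ₀ → μ < μ₀) → μ₀ ∈ T →
      ∀ᶠ x in atTop, F x ≠ 0 := by
    intro μ₀ hb0 hmax hμ₀T
    have htend : Tendsto (fun x => F x * Real.exp (-(μ₀ * x))) atTop (𝓝 (b μ₀)) := by
      have heq : (fun x => F x * Real.exp (-(μ₀ * x)))
          = fun x => b μ₀ + ∑ μ ∈ T.erase μ₀, b μ * Real.exp ((μ - μ₀) * x) := by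
        funext x
        rw [hF, Finset.sum_mul, ← Finset.add_sum_erase _ _ hμ₀T]
        congr 1
        · rw [mul_assoc, ← Real.exp_add]; simp
        · apply Finset.sum_congr rfl
          intro μ _
          rw [mul_assoc, ← Real.exp_add]
          ring_nf
      rw [heq]
      have : Tendsto (fun x => ∑ μ ∈ T.erase μ₀, b μ * Real.exp ((μ - μ₀) * x)) atTop (𝓝 0) := by
        have h0 : (0 : ℝ) = ∑ μ ∈ T.erase μ₀, (0 : ℝ) := by simp
        rw [h0]
        apply tendsto_finset_sum
        intro μ hμ
        rcases eq_or_ne (b μ) 0 with hb | hb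
        · simpa [hb] using tendsto_const_nhds
        · have hμS : μ ∈ S := Finset.mem_filter.mpr ⟨Finset.mem_of_mem_erase hμ, hb⟩
          have hlt : μ - μ₀ < 0 := by
            have := hmax μ hμS (Finset.ne_of_mem_erase hμ)
            linarith
          have : Tendsto (fun x => Real.exp ((μ - μ₀) * x)) atTop (𝓝 0) := by
            have := Real.tendsto_exp_atBot.comp
              (Filter.Tendsto.const_mul_atTop_of_neg hlt tendsto_id)
            exact this
          simpa using this.const_mul (b μ)
      simpa using (tendsto_const_nhds (x := b μ₀)).add this
    have := htend.eventually_ne hb0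
    filter_upwards [this] with x hx
    intro hFx
    exact hx (by rw [hFx, zero_mul])
  -- second key: eventual nonvanishing at -∞
  have key' : ∀ (μ₀ : ℝ), b μ₀ ≠ 0 → (∀ μ ∈ S, μ ≠ μ₀ → μ₀ < μ) → μ₀ ∈ T →
      ∀ᶠ x in atBot, F x ≠ 0 := by
    intro μ₀ hb0 hmin hμ₀T
    have htend : Tendsto (fun x => F x * Real.exp (-(μ₀ * x))) atBot (𝓝 (b μ₀)) := by
      have heq : (fun x => F x * Real.exp (-(μ₀ * x)))
          = fun x => b μ₀ + ∑ μ ∈ T.erase μ₀, b μ * Real.exp ((μ - μ₀) * x) := by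
        funext x
        rw [hF, Finset.sum_mul, ← Finset.add_sum_erase _ _ hμ₀T]
        congr 1
        · rw [mul_assoc, ← Real.exp_add]; simp
        · apply Finset.sum_congr rfl
          intro μ _
          rw [mul_assoc, ← Real.exp_add]
          ring_nf
      rw [heq]
      have : Tendsto (fun x => ∑ μ ∈ T.erase μ₀, b μ * Real.exp ((μ - μ₀) * x)) atBot (𝓝 0) := by
        have h0 : (0 : ℝ) = ∑ μ ∈ T.erase μ₀, (0 : ℝ) := by simp
        rw [h0]
        apply tendsto_finset_sum
        intro μ hμ
        rcases eq_or_ne (b μ) 0 with hb | hb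
        · simpa [hb] using tendsto_const_nhds
        · have hμS : μ ∈ S := Finset.mem_filter.mpr ⟨Finset.mem_of_mem_erase hμ, hb⟩
          have hlt : (0:ℝ) < μ - μ₀ := by
            have := hmin μ hμS (Finset.ne_of_mem_erase hμ)
            linarith
          have : Tendsto (fun x => Real.exp ((μ - μ₀) * x)) atBot (𝓝 0) := by
            exact Real.tendsto_exp_atBot.comp
              (Filter.Tendsto.const_mul_atBot hlt tendsto_id)
          simpa using this.const_mul (b μ)
      simpa using (tendsto_const_nhds (x := b μ₀)).add this
    have := htend.eventually_ne hb0
    filter_upwards [this] with x hx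
    intro hFx
    exact hx (by rw [hFx, zero_mul])
  -- extract bounds
  have hmaxS := S.max'_mem hSne
  have hminS := S.min'_mem hSne
  have hbmax : b (S.max' hSne) ≠ 0 := (Finset.mem_filter.mp hmaxS).2
  have hbmin : b (S.min' hSne) ≠ 0 := (Finset.mem_filter.mp hminS).2
  have hevtop : ∀ᶠ x in atTop, F x ≠ 0 :=
    key _ hbmax (fun μ hμ hne => lt_of_le_of_ne (S.le_max' μ hμ) hne)
      (Finset.mem_filter.mp hmaxS).1
  have hevbot : ∀ᶠ x in atBot, F x ≠ 0 :=
    key' _ hbmin (fun μ hμ hne => lt_of_le_of_ne (S.min'_le μ hμ) (Ne.symm hne))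
      (Finset.mem_filter.mp hminS).1
  obtain ⟨a, ha⟩ := eventually_atTop.mp hevtop
  obtain ⟨a', ha'⟩ := eventually_atBot.mp hevbot
  have hZsub : {x : ℝ | F x = 0} ⊆ Set.Icc a' a := by
    intro x hx
    simp only [Set.mem_setOf_eq] at hx
    constructor
    · by_contra hlt
      exact ha' x (le_of_lt (lt_of_not_ge hlt)) hx
    · by_contra hlt
      exact ha x (le_of_lt (lt_of_not_ge hlt)) hx
  have hA : AnalyticOnNhd ℝ F Set.univ := by
    intro x _
    rw [hFfun]
    exact expsum_analyticAt T b x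
  have hfin : {x : ℝ | F x = 0}.Finite := by
    by_contra hinf
    have hinf' : {x : ℝ | F x = 0}.Infinite := hinf
    obtain ⟨z, hzK, hz⟩ := hinf'.exists_accPt_of_subset_isCompact isCompact_Icc hZsub
    rcases (hA z (Set.mem_univ z)).eventually_eq_zero_or_eventually_ne_zero with hcase | hcase
    · have := hA.eqOn_zero_of_preconnected_of_eventuallyEq_zero isPreconnected_univ
        (Set.mem_univ z) hcase
      exact hne fun x => this (Set.mem_univ x)
    · have hfreq : ∃ᶠ y in 𝓝 z, y ≠ z ∧ F y = 0 := by
        have := accPt_iff_frequently.mp hz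
        exact this
      have hev : ∀ᶠ y in 𝓝[≠] z, F y ≠ 0 := hcase
      have hev' : ∀ᶠ y in 𝓝 z, y ∈ ({z}ᶜ : Set ℝ) → F y ≠ 0 := by
        rw [Filter.Eventually, nhdsWithin, Filter.mem_inf_principal] at hev
        exact hev
      have : ∃ᶠ y in 𝓝 z, (y ≠ z ∧ F y = 0) ∧ (y ∈ ({z}ᶜ : Set ℝ) → F y ≠ 0) :=
        hfreq.and_eventually hev'
      obtain ⟨y, ⟨hy1, hy2⟩, hy3⟩ := this.exists
      exact (hy3 hy1) hy2
  refine ⟨hfin, a, fun x hx => ha x (le_of_lt hx)⟩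

lemma det_expsum {n m : ℕ} (κ c : Fin n → ℝ) (x : ℝ) (D : Matrix (Fin m) (Fin n) ℝ) :
    (Matrix.of fun (i l : Fin m) => ∑ j, D i j * κ j ^ (l : ℕ) * Real.exp (κ j * x + c j)).det
      = ∑ g : Fin m → Fin n, (∏ i, D i (g i)) * (Matrix.vandermonde (fun i => κ (g i))).det
          * Real.exp ((∑ i, κ (g i)) * x + ∑ i, c (g i)) := by
  classical
  have hrow : (Matrix.of fun (i l : Fin m) => ∑ j, D i j * κ j ^ (l : ℕ) * Real.exp (κ j * x + c j))
      = fun i => ∑ j, (D i j * Real.exp (κ j * x + c j)) • (fun l : Fin m => κ j ^ (l : ℕ)) := by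
    funext i l
    rw [Finset.sum_apply]
    simp only [Matrix.of_apply, Pi.smul_apply, smul_eq_mul]
    apply Finset.sum_congr rfl
    intro j _
    ring
  rw [show (Matrix.of fun (i l : Fin m) => ∑ j, D i j * κ j ^ (l : ℕ)
      * Real.exp (κ j * x + c j)).det
      = Matrix.detRowAlternating (Matrix.of fun (i l : Fin m) => ∑ j, D i j * κ j ^ (l : ℕ)
        * Real.exp (κ j * x + c j)) from rfl, hrow]
  rw [show (Matrix.detRowAlternating (fun i => ∑ j, (D i j * Real.exp (κ j * x + c j))
      • (fun l : Fin m => κ j ^ (l : ℕ))) : ℝ)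
      = (Matrix.detRowAlternating : AlternatingMap ℝ (Fin m → ℝ) ℝ (Fin m)).toMultilinearMap
        (fun i => ∑ j, (D i j * Real.exp (κ j * x + c j)) • (fun l : Fin m => κ j ^ (l : ℕ)))
      from rfl]
  rw [MultilinearMap.map_sum]
  apply Finset.sum_congr rfl
  intro g _
  rw [MultilinearMap.map_smul_univ]
  have hv : ((Matrix.detRowAlternating : AlternatingMap ℝ (Fin m → ℝ) ℝ (Fin m)).toMultilinearMap
      (fun i => (fun l : Fin m => κ (g i) ^ (l : ℕ))) : ℝ)
      = (Matrix.vandermonde (fun i => κ (g i))).det := rfl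
  rw [hv, smul_eq_mul, Finset.prod_mul_distrib, ← Real.exp_sum]
  have : (∑ i, (κ (g i) * x + c (g i))) = (∑ i, κ (g i)) * x + ∑ i, c (g i) := by
    rw [Finset.sum_add_distrib, Finset.sum_mul]
  rw [this]
  ring

lemma exists_nonzero_minor {k n : ℕ} (hkn : k < n)
    (A : Matrix (Fin k) (Fin n) ℝ) (hrank : A.rank = k) :
    ∃ I : Finset (Fin n), I.card = k ∧ maxMinor A I ≠ 0 := by
  classical
  have hn : 0 < n := Nat.lt_of_le_of_lt (Nat.zero_le k) hkn
  -- the columns of A span ℝᵏ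
  have hspan : Submodule.span ℝ (Set.range A.transpose) = ⊤ := by
    apply Submodule.eq_top_of_finrank_eq
    have := (Matrix.rank_eq_finrank_span_cols A).symm
    rw [hrank] at this
    rw [show Module.finrank ℝ (Submodule.span ℝ (Set.range A.transpose)) = k from this]
    simp [Module.finrank_pi]
  obtain ⟨b, hbsub, hbspan, hbind⟩ := exists_linearIndependent ℝ (Set.range A.transpose)
  rw [hspan] at hbspan
  have hbfin : b.Finite := (Set.finite_range A.transpose).subset hbsub
  haveI : Fintype b := hbfin.fintype
  have hbcard : b.toFinset.card = k := by
    have h1 : Module.finrank ℝ (Submodule.span ℝ b) = b.toFinset.card :=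
      finrank_span_set_eq_card hbind
    rw [hbspan] at h1
    have h2 : Module.finrank ℝ (⊤ : Submodule ℝ (Fin k → ℝ)) = k := by
      simp [Module.finrank_pi]
    exact h1.symm.trans h2
  -- pick a column index for each element of b
  have hpick : ∀ y ∈ b, ∃ j : Fin n, A.transpose j = y := fun y hy => hbsub hy
  set pick : (Fin k → ℝ) → Fin n := fun y =>
    if h : ∃ j : Fin n, A.transpose j = y then h.choose else ⟨0, hn⟩ with hpickdef
  have hpick' : ∀ y ∈ b, A.transpose (pick y) = y := by
    intro y hy
    have h : ∃ j : Fin n, A.transpose j = y := hpick y hy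
    simp only [hpickdef, dif_pos h]
    exact h.choose_spec
  have hpickinj : Set.InjOn pick b.toFinset := by
    intro y1 hy1 y2 hy2 hpe
    rw [Finset.mem_coe, Set.mem_toFinset] at hy1
    rw [Finset.mem_coe, Set.mem_toFinset] at hy2
    rw [← hpick' y1 hy1, ← hpick' y2 hy2, hpe]
  set I : Finset (Fin n) := b.toFinset.image pick with hI
  have hIcard : I.card = k := by
    rw [hI, Finset.card_image_of_injOn hpickinj, hbcard]
  refine ⟨I, hIcard, ?_⟩
  set emb : Fin k → Fin n := fun l => ((I.orderIsoOfFin hIcard) l : Fin n) with hemb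
  have hembI : ∀ l, emb l ∈ I := fun l => ((I.orderIsoOfFin hIcard) l).2
  have hembinj : Function.Injective emb := by
    intro l1 l2 he
    exact (I.orderIsoOfFin hIcard).injective (Subtype.ext he)
  -- each column A.transpose (emb l) belongs to b
  have hcolb : ∀ l, A.transpose (emb l) ∈ b := by
    intro l
    obtain ⟨y, hy, hye⟩ := Finset.mem_image.mp (hembI l)
    rw [Set.mem_toFinset] at hy
    rw [← hye, hpick' y hy]
    exact hy
  set θ : Fin k → b := fun l => ⟨A.transpose (emb l), hcolb l⟩ with hθ
  have hθinj : Function.Injective θ := by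
    intro l1 l2 he
    have hve : A.transpose (emb l1) = A.transpose (emb l2) := congrArg Subtype.val he
    -- emb l ∈ I means emb l = pick y for the corresponding y
    obtain ⟨y1, hy1, hye1⟩ := Finset.mem_image.mp (hembI l1)
    obtain ⟨y2, hy2, hye2⟩ := Finset.mem_image.mp (hembI l2)
    rw [Set.mem_toFinset] at hy1 hy2
    have e1 : A.transpose (emb l1) = y1 := by rw [← hye1, hpick' y1 hy1]
    have e2 : A.transpose (emb l2) = y2 := by rw [← hye2, hpick' y2 hy2]
    have : y1 = y2 := by rw [← e1, ← e2, hve]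
    apply hembinj
    rw [← hye1, ← hye2, this]
  have hAind : LinearIndependent ℝ (fun l : Fin k => A.transpose (emb l)) := by
    have := hbind.comp θ hθinj
    exact this
  -- the square submatrix has independent rows of its transpose
  have hdet : ((A.submatrix id emb).transpose).det ≠ 0 := by
    have hiu : IsUnit ((A.submatrix id emb).transpose) := by
      rw [← Matrix.linearIndependent_rows_iff_isUnit]
      exact hAind
    have := (Matrix.isUnit_iff_isUnit_det _).mp hiu
    exact this.ne_zero
  rw [Matrix.det_transpose] at hdet
  unfold maxMinor
  rw [dif_pos hIcard]
  exact hdet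

lemma det_expsum_pos {k n : ℕ} (κ c : Fin n → ℝ) (hκ : StrictMono κ)
    (A : Matrix (Fin k) (Fin n) ℝ)
    (hTNN : ∀ I : Finset (Fin n), I.card = k → 0 ≤ maxMinor A I)
    (hex : ∃ I : Finset (Fin n), I.card = k ∧ maxMinor A I ≠ 0) (x : ℝ) :
    0 < (Matrix.of fun (i l : Fin k) =>
        ∑ j, A i j * κ j ^ (l : ℕ) * Real.exp (κ j * x + c j)).det := by
  classical
  rw [det_expsum]
  set t : (Fin k → Fin n) → ℝ := fun g => (∏ i, A i (g i))
      * (Matrix.vandermonde (fun i => κ (g i))).det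
      * Real.exp ((∑ i, κ (g i)) * x + ∑ i, c (g i)) with ht
  -- non-injective terms vanish
  have hstep1 : ∑ g : Fin k → Fin n, t g
      = ∑ g ∈ Finset.univ.filter (fun g : Fin k → Fin n => Function.Injective g), t g := by
    symm
    apply Finset.sum_filter_of_ne
    intro g _ hne
    by_contra hninj
    obtain ⟨a, b, hab, hne'⟩ := Function.not_injective_iff.mp hninj
    have hvdm : (Matrix.vandermonde (fun i => κ (g i))).det = 0 := by
      apply Matrix.det_zero_of_row_eq hne'
      funext j
      simp [Matrix.vandermonde, hab]
    apply hne
    rw [ht]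
    simp [hvdm]
  -- fiber decomposition over column sets
  have hstep2 : ∑ g ∈ Finset.univ.filter (fun g : Fin k → Fin n => Function.Injective g), t g
      = ∑ I ∈ (Finset.univ : Finset (Finset (Fin n))).filter (fun I => I.card = k),
          ∑ g ∈ (Finset.univ.filter (fun g : Fin k → Fin n => Function.Injective g)).filter
            (fun g => Finset.univ.image g = I), t g := by
    symm
    apply Finset.sum_fiberwise_of_maps_to
    intro g hg
    rw [Finset.mem_filter] at hg ⊢
    exact ⟨Finset.mem_univ _, by
      rw [Finset.card_image_of_injective _ hg.2, Finset.card_univ, Fintype.card_fin]⟩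
  rw [hstep1, hstep2]
  -- evaluate each fiber
  have key : ∀ (I : Finset (Fin n)) (h : I.card = k),
      ∑ g ∈ (Finset.univ.filter (fun g : Fin k → Fin n => Function.Injective g)).filter
          (fun g => Finset.univ.image g = I), t g
        = maxMinor A I
            * (Matrix.vandermonde (fun l => κ (((I.orderIsoOfFin h) l : Fin n)))).det
            * Real.exp ((∑ l, κ (((I.orderIsoOfFin h) l : Fin n))) * x
                + ∑ l, c (((I.orderIsoOfFin h) l : Fin n))) := by
    intro I h
    set emb : Fin k → Fin n := fun l => ((I.orderIsoOfFin h) l : Fin n) with hembdef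
    have hembinj : Function.Injective emb := fun l1 l2 he =>
      (I.orderIsoOfFin h).injective (Subtype.ext he)
    have hembI : ∀ l, emb l ∈ I := fun l => ((I.orderIsoOfFin h) l).2
    have himage : Finset.univ.image emb = I := by
      apply Finset.eq_of_subset_of_card_le
      · intro j hj
        obtain ⟨l, _, hl⟩ := Finset.mem_image.mp hj
        rw [← hl]; exact hembI l
      · rw [Finset.card_image_of_injective _ hembinj, Finset.card_univ, Fintype.card_fin, h]
    have hbij : ∑ σ : Equiv.Perm (Fin k), t (emb ∘ σ)
        = ∑ g ∈ (Finset.univ.filter (fun g : Fin k → Fin n => Function.Injective g)).filter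
            (fun g => Finset.univ.image g = I), t g := by
      apply Finset.sum_bij (fun (σ : Equiv.Perm (Fin k)) _ => emb ∘ σ)
      · intro σ _
        rw [Finset.mem_filter, Finset.mem_filter]
        refine ⟨⟨Finset.mem_univ _, hembinj.comp σ.injective⟩, ?_⟩
        rw [← himage]
        apply Finset.eq_of_subset_of_card_le
        · intro j hj
          obtain ⟨l, _, hl⟩ := Finset.mem_image.mp hj
          exact Finset.mem_image.mpr ⟨σ l, Finset.mem_univ _, hl⟩
        · rw [Finset.card_image_of_injective _ hembinj,
            Finset.card_image_of_injective _ (hembinj.comp σ.injective)]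
      · intro σ1 _ σ2 _ he
        exact Equiv.ext fun i => hembinj (congrFun he i)
      · intro g hg
        rw [Finset.mem_filter, Finset.mem_filter] at hg
        obtain ⟨⟨_, hginj⟩, hgim⟩ := hg
        have hgI : ∀ i, g i ∈ I := fun i => by
          rw [← hgim]; exact Finset.mem_image.mpr ⟨i, Finset.mem_univ _, rfl⟩
        set σ0 : Fin k → Fin k := fun i => (I.orderIsoOfFin h).symm ⟨g i, hgI i⟩ with hσ0
        have hσ0inj : Function.Injective σ0 := by
          intro i1 i2 he
          apply hginj
          have := congrArg (fun z => (((I.orderIsoOfFin h) z : I) : Fin n)) he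
          simpa [hσ0] using this
        have hσ0bij : Function.Bijective σ0 := (Finite.injective_iff_bijective).mp hσ0inj
        refine ⟨Equiv.ofBijective σ0 hσ0bij, Finset.mem_univ _, ?_⟩
        funext i
        show emb (σ0 i) = g i
        rw [hembdef, hσ0]
        simp
      · intro σ _; rfl
    rw [← hbij]
    have hterm : ∀ σ : Equiv.Perm (Fin k), t (emb ∘ σ)
        = (((Equiv.Perm.sign σ : ℤ) : ℝ) * ∏ i, A i (emb (σ i)))
            * (Matrix.vandermonde (fun l => κ (emb l))).det
            * Real.exp ((∑ l, κ (emb l)) * x + ∑ l, c (emb l)) := by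
      intro σ
      rw [ht]
      have hv : (Matrix.vandermonde fun i => κ (emb (σ i)))
          = (Matrix.vandermonde (fun l => κ (emb l))).submatrix σ id := by
        ext i j
        simp [Matrix.vandermonde]
      have hsum1 : ∑ i, κ (emb (σ i)) = ∑ l, κ (emb l) := Equiv.sum_comp σ (fun l => κ (emb l))
      have hsum2 : ∑ i, c (emb (σ i)) = ∑ l, c (emb l) := Equiv.sum_comp σ (fun l => c (emb l))
      show (∏ i, A i (emb (σ i))) * (Matrix.vandermonde fun i => κ (emb (σ i))).det *
          Real.exp ((∑ i, κ (emb (σ i))) * x + ∑ i, c (emb (σ i))) = _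
      rw [hv, Matrix.det_permute, hsum1, hsum2]
      push_cast
      ring
    rw [Finset.sum_congr rfl (fun σ _ => hterm σ)]
    rw [← Finset.sum_mul, ← Finset.sum_mul]
    congr 1
    congr 1
    have hdet : maxMinor A I = ((A.submatrix id emb).transpose).det := by
      unfold maxMinor
      rw [dif_pos h, ← Matrix.det_transpose]
    rw [hdet, Matrix.det_apply']
    apply Finset.sum_congr rfl
    intro σ _
    rfl
  -- positivity
  apply Finset.sum_pos'
  · intro I hI
    have h : I.card = k := (Finset.mem_filter.mp hI).2
    rw [key I h]
    apply mul_nonneg (mul_nonneg (hTNN I h) ?_) (le_of_lt (Real.exp_pos _))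
    · rw [Matrix.det_vandermonde]
      apply le_of_lt
      apply Finset.prod_pos
      intro i _
      apply Finset.prod_pos
      intro j hj
      have hij : i < j := Finset.mem_Ioi.mp hj
      have : ((I.orderIsoOfFin h) i : Fin n) < ((I.orderIsoOfFin h) j : Fin n) := by
        have := (I.orderIsoOfFin h).strictMono hij
        exact this
      have := hκ this
      linarith
  · obtain ⟨I₀, hc₀, hm₀⟩ := hex
    refine ⟨I₀, Finset.mem_filter.mpr ⟨Finset.mem_univ _, hc₀⟩, ?_⟩
    rw [key I₀ hc₀]
    apply mul_pos (mul_pos (lt_of_le_of_ne (hTNN I₀ hc₀) (Ne.symm hm₀)) ?_) (Real.exp_pos _)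
    · rw [Matrix.det_vandermonde]
      apply Finset.prod_pos
      intro i _
      apply Finset.prod_pos
      intro j hj
      have hij : i < j := Finset.mem_Ioi.mp hj
      have : ((I₀.orderIsoOfFin hc₀) i : Fin n) < ((I₀.orderIsoOfFin hc₀) j : Fin n) :=
        (I₀.orderIsoOfFin hc₀).strictMono hij
      have := hκ this
      linarith

/-- Column-operation identity: if the last column of `M` is `∑ s, w' s • (col s)` plus
`Ψ0` in the bottom-right corner, then `det M = Ψ0 * det (top-left block)`. -/
lemma det_column_op {k : ℕ} (hk : 1 ≤ k) (M : Matrix (Fin (k+1)) (Fin (k+1)) ℝ)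
    (w' : Fin k → ℝ) (Ψ0 : ℝ)
    (colIdx : Fin k → Fin (k+1))
    (hcolIdx : ∀ s, colIdx s ≠ Fin.last k)
    (h1 : ∀ i : Fin k, M (Fin.castSucc i) (Fin.last k)
        = ∑ s, w' s * M (Fin.castSucc i) (colIdx s))
    (h2 : M (Fin.last k) (Fin.last k)
        = Ψ0 + ∑ s, w' s * M (Fin.last k) (colIdx s)) :
    M.det = Ψ0 * (M.submatrix Fin.castSucc Fin.castSucc).det := by
  classical
  set u : Fin (k+1) → ℝ := fun i => ∑ s, w' s * M i (colIdx s) with hu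
  set p : Fin (k+1) → ℝ := Pi.single (Fin.last k) Ψ0 with hp
  have hcol : (fun i => M i (Fin.last k)) = u + p := by
    funext i
    induction i using Fin.lastCases with
    | last =>
        show M (Fin.last k) (Fin.last k) = u (Fin.last k) + p (Fin.last k)
        rw [h2, hu, hp]
        simp [add_comm]
    | cast i =>
        show M (Fin.castSucc i) (Fin.last k) = u (Fin.castSucc i) + p (Fin.castSucc i)
        rw [h1, hu, hp]
        have : (Pi.single (Fin.last k) Ψ0 : Fin (k+1) → ℝ) (Fin.castSucc i) = 0 :=
          Pi.single_eq_of_ne (Fin.castSucc_lt_last i).ne _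
        simp [this]
  -- the linear map col ↦ det (M with last column replaced by col)
  set L : (Fin (k+1) → ℝ) →ₗ[ℝ] ℝ :=
    { toFun := fun col => (M.updateCol (Fin.last k) col).det
      map_add' := fun a b => Matrix.det_updateCol_add M (Fin.last k) a b
      map_smul' := fun r a => Matrix.det_updateCol_smul M (Fin.last k) r a } with hL
  have hMdet : M.det = L ((fun i => M i (Fin.last k))) := by
    rw [hL]
    show M.det = (M.updateCol (Fin.last k) (fun i => M i (Fin.last k))).det
    rw [Matrix.updateCol_eq_self]
  rw [hMdet, hcol, map_add]
  -- the `u` part vanishes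
  have hLu : L u = 0 := by
    have husum : u = ∑ s, w' s • (fun i => M i (colIdx s)) := by
      funext i
      rw [hu]
      rw [Finset.sum_apply]
      apply Finset.sum_congr rfl
      intro s _
      simp
    rw [husum, map_sum]
    apply Finset.sum_eq_zero
    intro s _
    rw [map_smul]
    have : L (fun i => M i (colIdx s)) = 0 := by
      rw [hL]
      exact Matrix.det_updateCol_eq_zero (hcolIdx s)
    rw [this]
    simp
  rw [hLu, zero_add]
  -- the `p` part gives the minor
  have hpsmul : p = Ψ0 • (Pi.single (Fin.last k) 1 : Fin (k+1) → ℝ) := by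
    funext i
    rw [hp]
    by_cases hi : i = Fin.last k
    · subst hi; simp
    · simp [Pi.single_eq_of_ne hi]
  rw [hpsmul, map_smul]
  have hminor : L ((Pi.single (Fin.last k) 1 : Fin (k+1) → ℝ))
      = (M.submatrix Fin.castSucc Fin.castSucc).det := by
    rw [hL]
    show (M.updateCol (Fin.last k) ((Pi.single (Fin.last k) 1 : Fin (k+1) → ℝ))).det = _
    set N := M.updateCol (Fin.last k) ((Pi.single (Fin.last k) 1 : Fin (k+1) → ℝ)) with hN
    have hdet : (N.submatrix finSumFinEquiv finSumFinEquiv).det = N.det :=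
      Matrix.det_submatrix_equiv_self finSumFinEquiv N
    have hblocks : N.submatrix finSumFinEquiv finSumFinEquiv
        = Matrix.fromBlocks (M.submatrix Fin.castSucc Fin.castSucc) 0
            (Matrix.of fun (_ : Fin 1) l => M (Fin.last k) (Fin.castSucc l)) 1 := by
      have hleft : ∀ i : Fin k, finSumFinEquiv (Sum.inl i) = Fin.castSucc i := by
        intro i
        rw [finSumFinEquiv_apply_left]
        rfl
      have hright : ∀ j : Fin 1, finSumFinEquiv (Sum.inr j) = Fin.last k := by
        intro j
        rw [finSumFinEquiv_apply_right]
        have : (j : ℕ) = 0 := by omega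
        apply Fin.ext
        simp [Fin.natAdd, this, Fin.last]
      ext i j
      rcases i with i | i <;> rcases j with j | j
      · simp only [Matrix.submatrix_apply, hleft, hright, Matrix.fromBlocks_apply₁₁, hN]
        rw [Matrix.updateCol_ne (Fin.castSucc_lt_last j).ne]
      · simp only [Matrix.submatrix_apply, hleft, hright, Matrix.fromBlocks_apply₁₂, hN]
        rw [Matrix.updateCol_self]
        rw [Pi.single_eq_of_ne (Fin.castSucc_lt_last i).ne]
        simp
      · simp only [Matrix.submatrix_apply, hleft, hright, Matrix.fromBlocks_apply₂₁, hN]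
        rw [Matrix.updateCol_ne (Fin.castSucc_lt_last j).ne]
        rfl
      · simp only [Matrix.submatrix_apply, hleft, hright, Matrix.fromBlocks_apply₂₂, hN]
        rw [Matrix.updateCol_self, Pi.single_eq_same]
        have hij : i = j := Subsingleton.elim i j
        rw [hij, Matrix.one_apply_eq]
    rw [← hdet, hblocks, Matrix.det_fromBlocks_zero₁₂]
    simp
  rw [hminor]
  simp

/-- for TNN soliton data with Darboux coefficients `w`, the dressed
wave function `Ψ_v` of any vector `v ∈ ℝⁿ` either vanishes identically on `ℝ`, or
has a finite zero set — in which case it is nonzero for all sufficiently large `x`. -/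
theorem dressed_wave_function_zero_set
    (k n : ℕ) (hk : 1 ≤ k) (hkn : k < n)
    (κ c : Fin n → ℝ) (hκ : StrictMono κ)
    (A : Matrix (Fin k) (Fin n) ℝ) (hrank : A.rank = k)
    (hTNN : ∀ I : Finset (Fin n), I.card = k → 0 ≤ maxMinor A I)
    (f : Fin k → ℝ → ℝ)
    (hf : ∀ i x, f i x = ∑ j, A i j * Real.exp (κ j * x + c j))
    (w : Fin k → ℝ → ℝ)
    (hw : ∀ x i, iteratedDeriv k (f i) x =
      ∑ s : Fin k, w s x * iteratedDeriv (k - 1 - (s : ℕ)) (f i) x)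
    (v : Fin n → ℝ) (h Ψ : ℝ → ℝ)
    (hh : ∀ x, h x = ∑ j, v j * Real.exp (κ j * x + c j))
    (hΨ : ∀ x, Ψ x = iteratedDeriv k h x -
      ∑ s : Fin k, w s x * iteratedDeriv (k - 1 - (s : ℕ)) h x) :
    (∀ x, Ψ x = 0) ∨
      ({x : ℝ | Ψ x = 0}.Finite ∧ ∃ x₀ : ℝ, ∀ x, x₀ < x → Ψ x ≠ 0) := by
  classical
  -- the bordered coefficient matrix
  set B : Fin (k+1) → Fin n → ℝ := Fin.snoc (fun i => A i) v with hB
  have hBcast : ∀ i : Fin k, B (Fin.castSucc i) = A i := fun i => Fin.snoc_castSucc _ _ _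
  have hBlast : B (Fin.last k) = v := Fin.snoc_last _ _
  -- identify the rows as functions
  have hfB : ∀ i : Fin k, f i = fun x => ∑ j, B (Fin.castSucc i) j * Real.exp (κ j * x + c j) := by
    intro i
    funext x
    rw [hf i x, hBcast]
  have hhB : h = fun x => ∑ j, B (Fin.last k) j * Real.exp (κ j * x + c j) := by
    funext x
    rw [hh x, hBlast]
  -- the bordered Wronskian matrix and the plain Wronskian matrix
  set Mfull : ℝ → Matrix (Fin (k+1)) (Fin (k+1)) ℝ := fun x => Matrix.of fun i l =>
      ∑ j, B i j * κ j ^ (l : ℕ) * Real.exp (κ j * x + c j) with hMfull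
  set W : ℝ → Matrix (Fin k) (Fin k) ℝ := fun x => Matrix.of fun i l =>
      ∑ j, A i j * κ j ^ (l : ℕ) * Real.exp (κ j * x + c j) with hW
  -- entries are iterated derivatives
  have hMentry : ∀ x (i l : Fin (k+1)), Mfull x i l
      = iteratedDeriv (l : ℕ) (fun x => ∑ j, B i j * Real.exp (κ j * x + c j)) x := by
    intro x i l
    rw [iteratedDeriv_expsum]
    rfl
  -- positivity of the Wronskian
  have hWpos : ∀ x, 0 < (W x).det := fun x =>
    det_expsum_pos κ c hκ A hTNN (exists_nonzero_minor hkn A hrank) x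
  -- column indices for the Darboux relation
  set colIdx : Fin k → Fin (k+1) := fun s => ⟨k - 1 - (s : ℕ), by omega⟩ with hcolIdxdef
  have hcolIdx : ∀ s, colIdx s ≠ Fin.last k := by
    intro s
    have hs : (s : ℕ) < k := s.isLt
    simp only [hcolIdxdef, Ne, Fin.ext_iff, Fin.last]
    omega
  have hcolval : ∀ s : Fin k, ((colIdx s) : ℕ) = k - 1 - (s : ℕ) := fun s => rfl
  have hlastval : ((Fin.last k) : ℕ) = k := rfl
  -- the key factorization det (Mfull x) = Ψ x * det (W x)
  have hkey : ∀ x, (Mfull x).det = Ψ x * (W x).det := by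
    intro x
    have hsub : (Mfull x).submatrix Fin.castSucc Fin.castSucc = W x := by
      ext i l
      simp only [Matrix.submatrix_apply, hMfull, hW, Matrix.of_apply, hBcast]
      rfl
    rw [← hsub]
    apply det_column_op hk (Mfull x) (fun s => w s x) (Ψ x) colIdx hcolIdx
    · intro i
      have e1 : Mfull x (Fin.castSucc i) (Fin.last k) = iteratedDeriv k (f i) x := by
        rw [hMentry, hlastval, hfB i]
      have e2 : ∀ s : Fin k, Mfull x (Fin.castSucc i) (colIdx s)
          = iteratedDeriv (k - 1 - (s : ℕ)) (f i) x := by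
        intro s
        rw [hMentry, hcolval, hfB i]
      rw [e1, hw x i]
      apply Finset.sum_congr rfl
      intro s _
      rw [e2]
    · have e1 : Mfull x (Fin.last k) (Fin.last k) = iteratedDeriv k h x := by
        rw [hMentry, hlastval, hhB]
      have e2 : ∀ s : Fin k, Mfull x (Fin.last k) (colIdx s)
          = iteratedDeriv (k - 1 - (s : ℕ)) h x := by
        intro s
        rw [hMentry, hcolval, hhB]
      rw [e1]
      have := hΨ x
      have hrw : iteratedDeriv k h x
          = Ψ x + ∑ s : Fin k, w s x * iteratedDeriv (k - 1 - (s : ℕ)) h x := by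
        rw [this]; ring
      rw [hrw]
      congr 1
      apply Finset.sum_congr rfl
      intro s _
      rw [e2]
  -- the bordered Wronskian as an exponential sum
  set keyf : (Fin (k+1) → Fin n) → ℝ := fun g => ∑ i, κ (g i) with hkeyf
  set T : Finset ℝ := Finset.image keyf Finset.univ with hT
  set bcoef : ℝ → ℝ := fun μ => ∑ g ∈ Finset.univ.filter (fun g => keyf g = μ),
      (∏ i, B i (g i)) * (Matrix.vandermonde (fun i => κ (g i))).det
        * Real.exp (∑ i, c (g i)) with hbcoef
  have hDrep : ∀ x, (Mfull x).det = ∑ μ ∈ T, bcoef μ * Real.exp (μ * x) := by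
    intro x
    show (Matrix.of fun (i l : Fin (k+1)) =>
        ∑ j, (Matrix.of B) i j * κ j ^ (l : ℕ) * Real.exp (κ j * x + c j)).det = _
    rw [det_expsum κ c x (Matrix.of B)]
    rw [← Finset.sum_fiberwise_of_maps_to (g := keyf) (t := T)
      (fun g _ => Finset.mem_image_of_mem keyf (Finset.mem_univ g))]
    apply Finset.sum_congr rfl
    intro μ _
    rw [hbcoef, Finset.sum_mul]
    apply Finset.sum_congr rfl
    intro g hg
    have hgμ : keyf g = μ := (Finset.mem_filter.mp hg).2
    simp only [Matrix.of_apply]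
    rw [← hgμ, hkeyf]
    rw [Real.exp_add]
    ring
  -- main case split
  by_cases hD : ∀ x, (Mfull x).det = 0
  · left
    intro x
    have := hD x
    rw [hkey x] at this
    exact (mul_eq_zero.mp this).resolve_right (hWpos x).ne'
  · right
    have hDne : ¬ ∀ x, (fun x => (Mfull x).det) x = 0 := hD
    obtain ⟨hfin, x₀, hx₀⟩ := expsum_zero_set T bcoef (fun x => (Mfull x).det) hDrep hDne
    constructor
    · apply hfin.subset
      intro x hx
      simp only [Set.mem_setOf_eq] at hx ⊢
      rw [hkey x, hx, zero_mul]
    · refine ⟨x₀, fun x hx hΨx => ?_⟩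
      apply hx₀ x hx
      rw [hkey x, hΨx, zero_mul]
end
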